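/- arXiv:1402.2851 — 12 statements merged into one kernel-verified Lean document; each statement's English description precedes it below -/
import Mathlib

section
/- Let A be a unital algebra with an involutive anti-automorphism • and invertible elements a, b, c, x with a·b⁻¹ = (b•)⁻¹·a• and b⁻¹·c = c•·(b•)⁻¹ and x·b• = 1 + a·c•. Then a⁻¹·x = x•·(a•)⁻¹ and x·c⁻¹ = (c•)⁻¹·x•. -/
/-- In a unital ring with an involutive anti-automorphism `σ`
and invertible elements `a, b, c, x` (with invertible bullet images),
the relations `a·b⁻¹ = (b•)⁻¹·a•`, `b⁻¹·c = c•·(b•)⁻¹`, `x·b• = 1 + a·c•`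
imply `a⁻¹·x = x•·(a•)⁻¹` and `x·c⁻¹ = (c•)⁻¹·x•`. -/
theorem stmt1 {A : Type*} [Ring A] (σ : A → A)
    (hσmul : ∀ u v : A, σ (u * v) = σ v * σ u)
    (hσadd : ∀ u v : A, σ (u + v) = σ u + σ v)
    (hσinv : ∀ u : A, σ (σ u) = u)
    (hσone : σ 1 = 1)
    (a b c x ab bb cb xb : Aˣ)
    (hab : σ ↑a = ↑ab) (hbb : σ ↑b = ↑bb) (hcb : σ ↑c = ↑cb) (hxb : σ ↑x = ↑xb)
    (h1 : (a : A) * ↑b⁻¹ = ↑bb⁻¹ * ↑ab)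
    (h2 : (↑b⁻¹ : A) * ↑c = ↑cb * ↑bb⁻¹)
    (h3 : (x : A) * ↑bb = 1 + ↑a * ↑cb) :
    (↑a⁻¹ : A) * ↑x = ↑xb * ↑ab⁻¹ ∧ (x : A) * ↑c⁻¹ = ↑cb⁻¹ * ↑xb := by
  -- Apply σ to h3 to get b·xb = 1 + c·ab
  have e2 : (b : A) * ↑xb = 1 + ↑c * ↑ab := by
    have := congrArg σ h3
    rw [hσmul, hσadd, hσmul, hσone, hxb, ← hbb] at this
    rw [hσinv, hab, ← hcb, hσinv] at this
    exact this
  -- x and xb expressed via the other side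
  have ex : (x : A) = (1 + ↑a * ↑cb) * ↑bb⁻¹ := by
    rw [← h3, Units.mul_inv_cancel_right]
  have exb : (xb : A) = ↑b⁻¹ * (1 + ↑c * ↑ab) := by
    rw [← e2, Units.inv_mul_cancel_left]
  have f1 : (↑bb⁻¹ : A) * ↑ab = ↑a * ↑b⁻¹ := h1.symm
  -- key identity 1 : x * ab = a * xb
  have k1 : (x : A) * ↑ab = ↑a * ↑xb := by
    rw [ex, exb]
    calc (1 + (a : A) * ↑cb) * ↑bb⁻¹ * ↑ab
        = (1 + (a : A) * ↑cb) * (↑bb⁻¹ * ↑ab) := by rw [mul_assoc]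
      _ = (1 + (a : A) * ↑cb) * (↑a * ↑b⁻¹) := by rw [f1]
      _ = ↑a * ↑b⁻¹ + ↑a * (↑cb * (↑bb⁻¹ * ↑ab)) := by rw [f1]; noncomm_ring
      _ = ↑a * ↑b⁻¹ + ↑a * ((↑cb * ↑bb⁻¹) * ↑ab) := by rw [mul_assoc]
      _ = ↑a * ↑b⁻¹ + ↑a * ((↑b⁻¹ * ↑c) * ↑ab) := by rw [← h2]
      _ = ↑a * (↑b⁻¹ * (1 + ↑c * ↑ab)) := by noncomm_ring
  -- key identity 2 : cb * x = xb * c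
  have k2 : (cb : A) * ↑x = ↑xb * ↑c := by
    rw [ex, exb]
    calc (cb : A) * ((1 + ↑a * ↑cb) * ↑bb⁻¹)
        = (↑cb * ↑bb⁻¹) + ↑cb * ↑a * (↑cb * ↑bb⁻¹) := by noncomm_ring
      _ = (↑b⁻¹ * ↑c) + ↑cb * ↑a * (↑b⁻¹ * ↑c) := by rw [← h2]
      _ = (↑b⁻¹ * ↑c) + ↑cb * (↑bb⁻¹ * ↑ab) * ↑c := by rw [f1]; noncomm_ring
      _ = (↑b⁻¹ * ↑c) + (↑cb * ↑bb⁻¹) * ↑ab * ↑c := by noncomm_ring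
      _ = (↑b⁻¹ * ↑c) + (↑b⁻¹ * ↑c) * ↑ab * ↑c := by rw [← h2]
      _ = ↑b⁻¹ * (1 + ↑c * ↑ab) * ↑c := by noncomm_ring
  constructor
  · have hx : (x : A) = ↑a * ↑xb * ↑ab⁻¹ := by
      rw [← k1, Units.mul_inv_cancel_right]
    rw [hx, ← mul_assoc, ← mul_assoc, Units.inv_mul, one_mul]
  · have hx : (x : A) = ↑cb⁻¹ * (↑xb * ↑c) := by
      rw [← k2, Units.inv_mul_cancel_left]
    rw [hx, mul_assoc, mul_assoc, Units.mul_inv, mul_one]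
end

section
/- Let A be a unital algebra with an involutive anti-automorphism •, and invertible a, b, c, x satisfying a·b⁻¹ = (b•)⁻¹·a• and b⁻¹·c = c•·(b•)⁻¹. Then the system { x = (b•)⁻¹ + a·b⁻¹·c and b = (x•)⁻¹ + c·x⁻¹·a } holds if and only if the single equation x·b• = 1 + a·c• holds. -/
private lemma sigma_inv_aux {A : Type*} [Ring A] (σ : A → A)
    (hσmul : ∀ u v : A, σ (u * v) = σ v * σ u) (hσone : σ 1 = 1)
    (u ub : Aˣ) (h : σ ↑u = ↑ub) : σ ((↑u⁻¹ : A)) = ↑ub⁻¹ := by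
  have h1 : σ ((↑u⁻¹ : A)) * ↑ub = 1 := by
    rw [← h, ← hσmul, Units.mul_inv, hσone]
  calc σ ((↑u⁻¹ : A)) = σ ((↑u⁻¹ : A)) * (↑ub * ↑ub⁻¹) := by
        rw [Units.mul_inv, mul_one]
    _ = (σ ((↑u⁻¹ : A)) * ↑ub) * ↑ub⁻¹ := by rw [mul_assoc]
    _ = ↑ub⁻¹ := by rw [h1, one_mul]

/-- In a unital ring with an involutive anti-automorphism `σ`
and invertible `a, b, c, x` with `a·b⁻¹ = (b•)⁻¹·a•` and `b⁻¹·c = c•·(b•)⁻¹`,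
the system `x = (b•)⁻¹ + a·b⁻¹·c` and `b = (x•)⁻¹ + c·x⁻¹·a` holds if and
only if the single equation `x·b• = 1 + a·c•` holds. -/
theorem stmt2 {A : Type*} [Ring A] (σ : A → A)
    (hσmul : ∀ u v : A, σ (u * v) = σ v * σ u)
    (hσadd : ∀ u v : A, σ (u + v) = σ u + σ v)
    (hσinv : ∀ u : A, σ (σ u) = u)
    (hσone : σ 1 = 1)
    (a b c x ab bb cb xb : Aˣ)
    (hab : σ ↑a = ↑ab) (hbb : σ ↑b = ↑bb) (hcb : σ ↑c = ↑cb) (hxb : σ ↑x = ↑xb)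
    (h1 : (a : A) * ↑b⁻¹ = ↑bb⁻¹ * ↑ab)
    (h2 : (↑b⁻¹ : A) * ↑c = ↑cb * ↑bb⁻¹) :
    ((x : A) = ↑bb⁻¹ + ↑a * ↑b⁻¹ * ↑c ∧ (b : A) = ↑xb⁻¹ + ↑c * ↑x⁻¹ * ↑a)
      ↔ (x : A) * ↑bb = 1 + ↑a * ↑cb := by
  have hbbb : σ (↑bb : A) = ↑b := by rw [← hbb, hσinv]
  have hcbb : σ (↑cb : A) = ↑c := by rw [← hcb, hσinv]
  have hbinv : σ ((↑b⁻¹ : A)) = ↑bb⁻¹ := sigma_inv_aux σ hσmul hσone b bb hbb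
  have hbbinv : σ ((↑bb⁻¹ : A)) = ↑b⁻¹ := sigma_inv_aux σ hσmul hσone bb b hbbb
  constructor
  · rintro ⟨he1, _⟩
    rw [he1, add_mul, Units.inv_mul]
    congr 1
    calc (↑a : A) * ↑b⁻¹ * ↑c * ↑bb = ↑a * (↑b⁻¹ * ↑c) * ↑bb := by
          rw [mul_assoc (↑a : A)]
      _ = ↑a * (↑cb * ↑bb⁻¹) * ↑bb := by rw [h2]
      _ = ↑a * ↑cb * (↑bb⁻¹ * ↑bb) := by noncomm_ring
      _ = ↑a * ↑cb := by rw [Units.inv_mul, mul_one]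
  · intro hm
    have he1 : (↑x : A) = ↑bb⁻¹ + ↑a * ↑b⁻¹ * ↑c := by
      have hx : (↑x : A) = (1 + ↑a * ↑cb) * ↑bb⁻¹ := by
        rw [← hm, mul_assoc, Units.mul_inv, mul_one]
      rw [hx, add_mul, one_mul]
      congr 1
      rw [mul_assoc, ← h2, ← mul_assoc]
    have hxbval : (↑xb : A) = ↑b⁻¹ + ↑cb * (↑bb⁻¹ * ↑ab) := by
      rw [← hxb, he1, hσadd, hbbinv, hσmul, hσmul, hcb, hbinv, hab]
    have hkey : (↑a : A) * ↑xb = ↑x * ↑ab := by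
      rw [hxbval, he1]
      calc (↑a : A) * (↑b⁻¹ + ↑cb * (↑bb⁻¹ * ↑ab))
          = ↑a * ↑b⁻¹ + ↑a * ((↑cb * ↑bb⁻¹) * ↑ab) := by noncomm_ring
        _ = ↑a * ↑b⁻¹ + ↑a * ((↑b⁻¹ * ↑c) * ↑ab) := by rw [← h2]
        _ = ↑bb⁻¹ * ↑ab + ↑a * ↑b⁻¹ * ↑c * ↑ab := by rw [← h1]; noncomm_ring
        _ = (↑bb⁻¹ + ↑a * ↑b⁻¹ * ↑c) * ↑ab := by noncomm_ring
    have hbxb : (↑b : A) * ↑xb = 1 + ↑c * ↑ab := by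
      have h := congrArg σ hm
      rw [hσmul, hbbb, hxb, hσadd, hσone, hσmul, hcbb, hab] at h
      exact h
    have habxb : (↑ab : A) * ↑xb⁻¹ = ↑x⁻¹ * ↑a := by
      calc (↑ab : A) * ↑xb⁻¹ = ↑x⁻¹ * (↑x * ↑ab) * ↑xb⁻¹ := by
            rw [← mul_assoc, Units.inv_mul, one_mul]
        _ = ↑x⁻¹ * (↑a * ↑xb) * ↑xb⁻¹ := by rw [hkey]
        _ = ↑x⁻¹ * ↑a * (↑xb * ↑xb⁻¹) := by noncomm_ring
        _ = ↑x⁻¹ * ↑a := by rw [Units.mul_inv, mul_one]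
    refine ⟨he1, ?_⟩
    have hb : (↑b : A) = (1 + ↑c * ↑ab) * ↑xb⁻¹ := by
      rw [← hbxb, mul_assoc, Units.mul_inv, mul_one]
    rw [hb, add_mul, one_mul, mul_assoc, habxb, ← mul_assoc]
end

section
/- Let A be a unital algebra with an involutive anti-automorphism •, and define for invertible a, b, c ∈ A (with images a•, b•, c• under •) the 2×2 matrices V(a,b) = [[a·b⁻¹, (b•)⁻¹],[0,1]] and U(b,c) = [[1,0],[c⁻¹, b•·(c•)⁻¹]] over A. If a·b⁻¹ = (b•)⁻¹·a• and b⁻¹·c = c•·(b•)⁻¹ and x = (b•)⁻¹ + a·b⁻¹·c and b = (x•)⁻¹ + c·x⁻¹·a, then V(a,b)·U(b,c) = U(a,x)·V(x,c). -/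
/-- `V(a,b)` matrix; `bb` denotes the bullet image of `b`. -/
def Vmat {A : Type*} [Ring A] (a b bb : Aˣ) : Matrix (Fin 2) (Fin 2) A :=
  !![(a : A) * ↑b⁻¹, ↑bb⁻¹; 0, 1]

/-- `U(b,c)` matrix; `bb`, `cb` denote the bullet images of `b`, `c`. -/
def Umat {A : Type*} [Ring A] (b c bb cb : Aˣ) : Matrix (Fin 2) (Fin 2) A :=
  !![1, 0; ↑c⁻¹, (bb : A) * ↑cb⁻¹]

/-- If `a·b⁻¹ = (b•)⁻¹·a•`, `b⁻¹·c = c•·(b•)⁻¹`,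
`x = (b•)⁻¹ + a·b⁻¹·c` and `b = (x•)⁻¹ + c·x⁻¹·a`, then
`V(a,b)·U(b,c) = U(a,x)·V(x,c)`. -/
theorem stmt3 {A : Type*} [Ring A] (σ : A → A)
    (hσmul : ∀ u v : A, σ (u * v) = σ v * σ u)
    (hσadd : ∀ u v : A, σ (u + v) = σ u + σ v)
    (hσinv : ∀ u : A, σ (σ u) = u)
    (hσone : σ 1 = 1)
    (a b c x ab bb cb xb : Aˣ)
    (hab : σ ↑a = ↑ab) (hbb : σ ↑b = ↑bb) (hcb : σ ↑c = ↑cb) (hxb : σ ↑x = ↑xb)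
    (h1 : (a : A) * ↑b⁻¹ = ↑bb⁻¹ * ↑ab)
    (h2 : (↑b⁻¹ : A) * ↑c = ↑cb * ↑bb⁻¹)
    (hx : (x : A) = ↑bb⁻¹ + ↑a * ↑b⁻¹ * ↑c)
    (hb : (b : A) = ↑xb⁻¹ + ↑c * ↑x⁻¹ * ↑a) :
    Vmat a b bb * Umat b c bb cb = Umat a x ab xb * Vmat x c cb := by
  -- σ of inverse
  have hsinv : ∀ (u ub : Aˣ), σ ↑u = ↑ub → σ ↑u⁻¹ = ↑ub⁻¹ := by
    intro u ub h
    have e1 : σ ↑u⁻¹ * ↑ub = 1 := by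
      rw [← h, ← hσmul]
      simp [hσone]
    calc σ ↑u⁻¹ = σ ↑u⁻¹ * ↑ub * ↑ub⁻¹ := by
          rw [mul_assoc]; simp
      _ = ↑ub⁻¹ := by rw [e1, one_mul]
  have hxbx : σ ↑xb = ↑x := by rw [← hxb, hσinv]
  -- key identity for (1,1)
  have key : (bb : A) * ↑cb⁻¹ = ↑x⁻¹ * ↑cb⁻¹ + ↑ab * ↑xb⁻¹ := by
    have hb' := congrArg σ hb
    rw [hbb, hσadd, hσmul, hσmul, hab, hcb, hsinv x xb hxb, hsinv xb x hxbx] at hb'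
    have := congrArg (· * (↑cb⁻¹ : A)) hb'
    simp only [add_mul] at this
    rw [this]
    simp [mul_assoc]
  -- key identity for (0,0)
  have key0 : (a : A) * ↑b⁻¹ + ↑bb⁻¹ * ↑c⁻¹ = ↑x * ↑c⁻¹ := by
    rw [hx, add_mul, mul_assoc, mul_assoc]
    simp [add_comm]
  have key1 : (↑bb⁻¹ : A) * ((bb : A) * ↑cb⁻¹) = ↑cb⁻¹ := by
    rw [← mul_assoc]; simp
  have key2 : (↑x⁻¹ : A) * ((x : A) * ↑c⁻¹) = ↑c⁻¹ := by
    rw [← mul_assoc]; simp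
  ext i j
  fin_cases i <;> fin_cases j
  · simp [Vmat, Umat, Matrix.mul_apply, Fin.sum_univ_two, key0]
  · simp [Vmat, Umat, Matrix.mul_apply, Fin.sum_univ_two, key1]
  · simp [Vmat, Umat, Matrix.mul_apply, Fin.sum_univ_two, key2]
  · simp [Vmat, Umat, Matrix.mul_apply, Fin.sum_univ_two, key]
end

section
/- Let A be a unital algebra with an involutive anti-automorphism •, and let T : ℤ × ℤ → A (defined on pairs (j,k) with j+k even) take invertible values and satisfy: T(j,k+1)·T(j,k-1)• = 1 + T(j-1,k)·T(j+1,k)• for all j+k odd, together with T(j,k-1)⁻¹·T(j+1,k) = T(j+1,k)•·(T(j,k-1)•)⁻¹ and T(j-1,k)·T(j,k-1)⁻¹ = (T(j,k-1)•)⁻¹·T(j-1,k)• for all j+k odd. Then the quantity Γ(j,k) = T(j-1,k+1)·T(j,k)⁻¹ + (T(j,k)•)⁻¹·T(j+1,k-1)• satisfies Γ(j,k) = Γ(j-1,k-1), i.e. Γ is conserved in the (1,1) direction. -/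
/-- For a solution `T` of the noncommutative A₁ T-system (with
bullet images `Tb` under an involutive anti-automorphism `σ`), the quantity
`Γ(j,k) = T(j-1,k+1)·T(j,k)⁻¹ + (T(j,k)•)⁻¹·T(j+1,k-1)•` satisfies
`Γ(j,k) = Γ(j-1,k-1)`. -/
theorem stmt4 {A : Type*} [Ring A] (σ : A → A)
    (hσmul : ∀ u v : A, σ (u * v) = σ v * σ u)
    (hσadd : ∀ u v : A, σ (u + v) = σ u + σ v)
    (hσinv : ∀ u : A, σ (σ u) = u)
    (hσone : σ 1 = 1)
    (T Tb : ℤ → ℤ → Aˣ)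
    (hbul : ∀ j k : ℤ, σ ↑(T j k) = ↑(Tb j k))
    (hT : ∀ j k : ℤ, Odd (j + k) →
      (T j (k+1) : A) * ↑(Tb j (k-1)) = 1 + (T (j-1) k : A) * ↑(Tb (j+1) k))
    (hq1 : ∀ j k : ℤ, Odd (j + k) →
      (↑(T j (k-1))⁻¹ : A) * ↑(T (j+1) k) = (Tb (j+1) k : A) * ↑(Tb j (k-1))⁻¹)
    (hq2 : ∀ j k : ℤ, Odd (j + k) →
      (T (j-1) k : A) * ↑(T j (k-1))⁻¹ = (↑(Tb j (k-1))⁻¹ : A) * ↑(Tb (j-1) k))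
    (j k : ℤ) (hjk : Even (j + k)) :
    (T (j-1) (k+1) : A) * ↑(T j k)⁻¹ + (↑(Tb j k)⁻¹ : A) * ↑(Tb (j+1) (k-1))
      = (T (j-2) k : A) * ↑(T (j-1) (k-1))⁻¹
        + (↑(Tb (j-1) (k-1))⁻¹ : A) * ↑(Tb j (k-2)) := by
  obtain ⟨r, hr⟩ := hjk
  have po1 : Odd ((j - 1) + k) := ⟨r - 1, by omega⟩
  have po2 : Odd (j + (k - 1)) := ⟨r - 1, by omega⟩
  have h1 := hT (j - 1) k po1
  have h2 := hT j (k - 1) po2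
  have h3 := hq1 (j - 1) k po1
  rw [show j - 1 - 1 = j - 2 from by ring, show j - 1 + 1 = j from by ring] at h1
  rw [show k - 1 + 1 = k from by ring, show k - 1 - 1 = k - 2 from by ring] at h2
  rw [show j - 1 + 1 = j from by ring] at h3
  set P := T (j-1) (k+1)
  set Q := T j k
  set R := Tb j k
  set S := Tb (j+1) (k-1)
  set U := T (j-2) k
  set V := T (j-1) (k-1)
  set W := Tb (j-1) (k-1)
  set X := Tb j (k-2)
  -- h1 : ↑P * ↑W = 1 + ↑U * ↑R
  -- h2 : ↑Q * ↑X = 1 + ↑V * ↑S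
  -- h3 : ↑V⁻¹ * ↑Q = ↑R * ↑W⁻¹
  have hu : V⁻¹ * Q = R * W⁻¹ := Units.ext (by simpa using h3)
  have hQ : Q = V * (R * W⁻¹) := by rwa [inv_mul_eq_iff_eq_mul] at hu
  have hQi : (↑Q⁻¹ : A) = ↑W * ↑R⁻¹ * ↑V⁻¹ := by
    rw [hQ]; simp [mul_inv_rev, mul_assoc]
  have hP : (P : A) = (1 + ↑U * ↑R) * ↑W⁻¹ := by
    rw [← h1, Units.mul_inv_cancel_right]
  have hX : (X : A) = ↑Q⁻¹ * (1 + ↑V * ↑S) := by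
    rw [← h2, Units.inv_mul_cancel_left]
  rw [hP, hQi, hX, hQi]
  have e1 : ((1 : A) + ↑U * ↑R) * ↑W⁻¹ * (↑W * ↑R⁻¹ * ↑V⁻¹)
      = ↑R⁻¹ * ↑V⁻¹ + ↑U * ↑V⁻¹ := by
    calc ((1 : A) + ↑U * ↑R) * ↑W⁻¹ * (↑W * ↑R⁻¹ * ↑V⁻¹)
        = ((1 : A) + ↑U * ↑R) * (↑W⁻¹ * ↑W) * (↑R⁻¹ * ↑V⁻¹) := by
          noncomm_ring
      _ = ((1 : A) + ↑U * ↑R) * (↑R⁻¹ * ↑V⁻¹) := by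
          rw [Units.inv_mul, mul_one]
      _ = ↑R⁻¹ * ↑V⁻¹ + ↑U * (↑R * ↑R⁻¹) * ↑V⁻¹ := by noncomm_ring
      _ = ↑R⁻¹ * ↑V⁻¹ + ↑U * ↑V⁻¹ := by rw [Units.mul_inv, mul_one]
  have e2 : (↑W⁻¹ : A) * (↑W * ↑R⁻¹ * ↑V⁻¹ * (1 + ↑V * ↑S))
      = ↑R⁻¹ * ↑V⁻¹ + ↑R⁻¹ * ↑S := by
    calc (↑W⁻¹ : A) * (↑W * ↑R⁻¹ * ↑V⁻¹ * (1 + ↑V * ↑S))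
        = (↑W⁻¹ * ↑W) * (↑R⁻¹ * ↑V⁻¹ + ↑R⁻¹ * (↑V⁻¹ * ↑V) * ↑S) := by
          noncomm_ring
      _ = ↑R⁻¹ * ↑V⁻¹ + ↑R⁻¹ * ↑S := by
          rw [Units.inv_mul, Units.inv_mul, mul_one, one_mul]
  rw [e1, e2]
  abel
end

section
/- Under the hypotheses of the noncommutative A₁ T-system (relation T(j,k+1)·T(j,k-1)• = 1 + T(j-1,k)·T(j+1,k)• and the quasi-commutation relations), the quantity Δ(j,k) = T(j,k)⁻¹·T(j+1,k+1) + T(j-1,k-1)•·(T(j,k)•)⁻¹ satisfies Δ(j,k) = Δ(j+1,k-1), i.e. Δ is conserved in the (-1,1) direction. -/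
/-- For a solution `T` of the noncommutative A₁ T-system, the
quantity `Δ(j,k) = T(j,k)⁻¹·T(j+1,k+1) + T(j-1,k-1)•·(T(j,k)•)⁻¹` satisfies
`Δ(j,k) = Δ(j+1,k-1)`. -/
theorem stmt5 {A : Type*} [Ring A] (σ : A → A)
    (hσmul : ∀ u v : A, σ (u * v) = σ v * σ u)
    (hσadd : ∀ u v : A, σ (u + v) = σ u + σ v)
    (hσinv : ∀ u : A, σ (σ u) = u)
    (hσone : σ 1 = 1)
    (T Tb : ℤ → ℤ → Aˣ)
    (hbul : ∀ j k : ℤ, σ ↑(T j k) = ↑(Tb j k))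
    (hT : ∀ j k : ℤ, Odd (j + k) →
      (T j (k+1) : A) * ↑(Tb j (k-1)) = 1 + (T (j-1) k : A) * ↑(Tb (j+1) k))
    (hq1 : ∀ j k : ℤ, Odd (j + k) →
      (↑(T j (k-1))⁻¹ : A) * ↑(T (j+1) k) = (Tb (j+1) k : A) * ↑(Tb j (k-1))⁻¹)
    (hq2 : ∀ j k : ℤ, Odd (j + k) →
      (T (j-1) k : A) * ↑(T j (k-1))⁻¹ = (↑(Tb j (k-1))⁻¹ : A) * ↑(Tb (j-1) k))
    (j k : ℤ) (hjk : Even (j + k)) :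
    (↑(T j k)⁻¹ : A) * ↑(T (j+1) (k+1)) + (Tb (j-1) (k-1) : A) * ↑(Tb j k)⁻¹
      = (↑(T (j+1) (k-1))⁻¹ : A) * ↑(T (j+2) k)
        + (Tb j (k-2) : A) * ↑(Tb (j+1) (k-1))⁻¹ := by
  obtain ⟨m, hm⟩ := hjk
  have hσTb : ∀ u v : ℤ, σ ↑(Tb u v) = ↑(T u v) := fun u v => by rw [← hbul, hσinv]
  have ho1 : Odd ((j+1) + k) := ⟨m, by omega⟩
  have ho2 : Odd (j + (k-1)) := ⟨m-1, by omega⟩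
  -- E1 : b*h = 1 + a*q
  have E1 : (T (j+1) (k+1) : A) * ↑(Tb (j+1) (k-1)) = 1 + (T j k : A) * ↑(Tb (j+2) k) := by
    have h0 := hT (j+1) k ho1
    rw [show j+1-1 = j by ring, show j+1+1 = j+2 by ring] at h0
    exact h0
  -- E2 : p*d = 1 + e*c
  have E2 : (T j (k-2) : A) * ↑(Tb j k) = 1 + (T (j+1) (k-1) : A) * ↑(Tb (j-1) (k-1)) := by
    have h0 := hT j (k-1) ho2
    rw [show k-1+1 = k by ring, show k-1-1 = k-2 by ring] at h0
    have h1 := congrArg σ h0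
    rw [hσmul, hσadd, hσmul, hσone, hσTb, hσTb, hbul, hbul] at h1
    exact h1
  -- c3 : e⁻¹ * f = q * h⁻¹ (in A)
  have c3 : (↑(T (j+1) (k-1))⁻¹ : A) * ↑(T (j+2) k)
      = (Tb (j+2) k : A) * ↑(Tb (j+1) (k-1))⁻¹ := by
    have h0 := hq1 (j+1) k ho1
    rw [show j+1+1 = j+2 by ring] at h0
    exact h0
  -- u4 : p⁻¹ * e = h * g⁻¹ (units)
  have u4 : (T j (k-2))⁻¹ * T (j+1) (k-1) = Tb (j+1) (k-1) * (Tb j (k-2))⁻¹ := by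
    apply Units.ext
    have h0 := hq1 j (k-1) ho2
    rw [show k-1-1 = k-2 by ring] at h0
    simpa using h0
  -- u5 : a * e⁻¹ = h⁻¹ * d (units)
  have u5 : T j k * (T (j+1) (k-1))⁻¹ = (Tb (j+1) (k-1))⁻¹ * Tb j k := by
    apply Units.ext
    have h0 := hq2 (j+1) k ho1
    rw [show j+1-1 = j by ring] at h0
    simpa using h0
  -- c4 : e⁻¹ * p = g * h⁻¹ (in A)
  have u4' : (T (j+1) (k-1))⁻¹ * T j (k-2) = Tb j (k-2) * (Tb (j+1) (k-1))⁻¹ := by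
    have h0 := congrArg (·⁻¹) u4
    simpa [mul_inv_rev] using h0
  have c4 : (↑(T (j+1) (k-1))⁻¹ : A) * ↑(T j (k-2))
      = (Tb j (k-2) : A) * ↑(Tb (j+1) (k-1))⁻¹ := by
    have h0 := congrArg (Units.val) u4'
    simpa using h0
  -- c5 : a⁻¹ * h⁻¹ = e⁻¹ * d⁻¹ (in A)
  have hha : Tb (j+1) (k-1) * T j k = Tb j k * T (j+1) (k-1) := by
    have h0 := congrArg (fun x => Tb (j+1) (k-1) * x * T (j+1) (k-1)) u5
    simpa [mul_assoc] using h0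
  have u5' : (T j k)⁻¹ * (Tb (j+1) (k-1))⁻¹ = (T (j+1) (k-1))⁻¹ * (Tb j k)⁻¹ := by
    have h0 := congrArg (·⁻¹) hha
    simpa [mul_inv_rev] using h0
  have c5 : (↑(T j k)⁻¹ : A) * ↑(Tb (j+1) (k-1))⁻¹
      = (↑(T (j+1) (k-1))⁻¹ : A) * ↑(Tb j k)⁻¹ := by
    have h0 := congrArg (Units.val) u5'
    simpa using h0
  -- Piece 1
  have P1 : (↑(T j k)⁻¹ : A) * ↑(T (j+1) (k+1))
      = (↑(T (j+1) (k-1))⁻¹ : A) * ↑(Tb j k)⁻¹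
        + (↑(T (j+1) (k-1))⁻¹ : A) * ↑(T (j+2) k) := by
    have h1 : (↑(T j k)⁻¹ : A) * ↑(T (j+1) (k+1))
        = (↑(T j k)⁻¹ : A) * ((T (j+1) (k+1) : A) * ↑(Tb (j+1) (k-1)))
            * ↑(Tb (j+1) (k-1))⁻¹ := by
      simp [mul_assoc]
    rw [h1, E1, mul_add, mul_one, add_mul, ← mul_assoc ((↑(T j k)⁻¹ : A)),
      Units.inv_mul, one_mul, c5, c3]
  -- Piece 2
  have P2 : (Tb (j-1) (k-1) : A) * ↑(Tb j k)⁻¹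
      = (Tb j (k-2) : A) * ↑(Tb (j+1) (k-1))⁻¹
        - (↑(T (j+1) (k-1))⁻¹ : A) * ↑(Tb j k)⁻¹ := by
    have h3 : (T (j+1) (k-1) : A) * ↑(Tb (j-1) (k-1))
        = (T j (k-2) : A) * ↑(Tb j k) - 1 := eq_sub_of_add_eq' E2.symm
    have h4 : (Tb (j-1) (k-1) : A)
        = (↑(T (j+1) (k-1))⁻¹ : A) * ((T j (k-2) : A) * ↑(Tb j k)) - ↑(T (j+1) (k-1))⁻¹ := by
      have h5 : (Tb (j-1) (k-1) : A)
          = (↑(T (j+1) (k-1))⁻¹ : A) * ((T (j+1) (k-1) : A) * ↑(Tb (j-1) (k-1))) := by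
        simp [← mul_assoc]
      rw [h5, h3, mul_sub, mul_one]
    rw [h4, sub_mul, mul_assoc, mul_assoc, Units.mul_inv, mul_one, c4]
  rw [P1, P2]
  abel
end

section
/- Let A be a unital ring and R : ℤ → A with all R(n) invertible, satisfying R(n+1)·R(n)⁻¹·R(n-1) = R(n) + R(n)⁻¹ for all n ∈ ℤ (the noncommutative A₁ Q-system). Then the quantity C(n) = R(n+1)⁻¹·R(n)·R(n+1)·R(n)⁻¹ is conserved: C(n) = C(n-1) for all n. -/
/-- For the noncommutative A₁ Q-system
`R(n+1)·R(n)⁻¹·R(n-1) = R(n) + R(n)⁻¹`, the quantity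
`C(n) = R(n+1)⁻¹·R(n)·R(n+1)·R(n)⁻¹` is conserved: `C(n) = C(n-1)`. -/
theorem stmt9 {A : Type*} [Ring A] (R : ℤ → Aˣ)
    (hR : ∀ n : ℤ, (R (n+1) : A) * ↑(R n)⁻¹ * ↑(R (n-1)) = ↑(R n) + ↑(R n)⁻¹)
    (n : ℤ) :
    (↑(R (n+1))⁻¹ : A) * ↑(R n) * ↑(R (n+1)) * ↑(R n)⁻¹
      = (↑(R n)⁻¹ : A) * ↑(R (n-1)) * ↑(R n) * ↑(R (n-1))⁻¹ := by
  have h := hR n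
  have key : (↑(R n) : A) * ((R (n+1) : A) * ↑(R n)⁻¹ * ↑(R (n-1)))
      = ((R (n+1) : A) * ↑(R n)⁻¹ * ↑(R (n-1))) * ↑(R n) := by
    rw [h, mul_add, add_mul, Units.mul_inv, Units.inv_mul]
  have key2 := congrArg (fun x : A => (↑(R (n+1))⁻¹ : A) * x * ↑(R (n-1))⁻¹) key
  simpa [mul_assoc, Units.inv_mul, Units.mul_inv] using key2
end

section
/- Let A be a unital ring and R : ℤ → A with all R(n) invertible satisfying R(n+1)·R(n)⁻¹·R(n-1) = R(n) + R(n)⁻¹ for all n. Then K(n) = R(n+1)·R(n)⁻¹ + R(n)⁻¹·R(n-1) is conserved: K(n) = K(n-1) for all n, and K(1) = R(1)·R(0)⁻¹ + R(1)⁻¹·R(0)⁻¹ + R(1)⁻¹·R(0). -/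
/-- For the noncommutative A₁ Q-system
`R(n+1)·R(n)⁻¹·R(n-1) = R(n) + R(n)⁻¹`, the quantity
`K(n) = R(n+1)·R(n)⁻¹ + R(n)⁻¹·R(n-1)` is conserved, and
`K(1) = R(1)·R(0)⁻¹ + R(1)⁻¹·R(0)⁻¹ + R(1)⁻¹·R(0)`. -/
theorem stmt10 {A : Type*} [Ring A] (R : ℤ → Aˣ)
    (hR : ∀ n : ℤ, (R (n+1) : A) * ↑(R n)⁻¹ * ↑(R (n-1)) = ↑(R n) + ↑(R n)⁻¹) :
    (∀ n : ℤ, (R (n+1) : A) * ↑(R n)⁻¹ + (↑(R n)⁻¹ : A) * ↑(R (n-1))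
        = (R n : A) * ↑(R (n-1))⁻¹ + (↑(R (n-1))⁻¹ : A) * ↑(R (n-2)))
      ∧ (R 2 : A) * ↑(R 1)⁻¹ + (↑(R 1)⁻¹ : A) * ↑(R 0)
        = (R 1 : A) * ↑(R 0)⁻¹ + (↑(R 1)⁻¹ : A) * ↑(R 0)⁻¹ + (↑(R 1)⁻¹ : A) * ↑(R 0) := by
  have key : ∀ n : ℤ, (R (n+1) : A) * ↑(R n)⁻¹
      = ((R n : A) + ↑(R n)⁻¹) * ↑(R (n-1))⁻¹ := by
    intro n
    calc (R (n+1) : A) * ↑(R n)⁻¹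
        = (R (n+1) : A) * ↑(R n)⁻¹ * ↑(R (n-1)) * ↑(R (n-1))⁻¹ := by
          rw [Units.mul_inv_cancel_right]
      _ = _ := by rw [hR n]
  have key2 : ∀ n : ℤ, (↑(R (n-1))⁻¹ : A) * ↑(R (n-2))
      = (↑(R n)⁻¹ : A) * ((R (n-1) : A) + ↑(R (n-1))⁻¹) := by
    intro n
    have h := hR (n-1)
    rw [show n - 1 + 1 = n by ring, show n - 1 - 1 = n - 2 by ring] at h
    calc (↑(R (n-1))⁻¹ : A) * ↑(R (n-2))
        = ↑(R n)⁻¹ * ((R n : A) * ↑(R (n-1))⁻¹ * ↑(R (n-2))) := by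
          rw [← mul_assoc, ← mul_assoc, Units.inv_mul, one_mul]
      _ = _ := by rw [h]
  constructor
  · intro n
    rw [key n, key2 n]
    noncomm_ring
  · have h := key 1
    norm_num at h
    rw [h]
    noncomm_ring
end

section
/- Let A be a unital ring, C ∈ A invertible, and R : ℤ → A with all R(n) invertible. Suppose R(n)·R(n+1) = R(n+1)·C·R(n) for all n. Then the recursion R(n+1)·R(n)⁻¹·R(n-1) = R(n) + R(n)⁻¹ is equivalent to R(n+1)·C·R(n-1) = 1 + R(n)². -/
/-- Given the quasi-commutation `R(n)·R(n+1) = R(n+1)·C·R(n)`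
for all `n`, the recursion `R(n+1)·R(n)⁻¹·R(n-1) = R(n) + R(n)⁻¹` is
equivalent to `R(n+1)·C·R(n-1) = 1 + R(n)²`. -/
theorem stmt11 {A : Type*} [Ring A] (C : Aˣ) (R : ℤ → Aˣ)
    (hq : ∀ n : ℤ, (R n : A) * ↑(R (n+1)) = (R (n+1) : A) * ↑C * ↑(R n)) :
    (∀ n : ℤ, (R (n+1) : A) * ↑(R n)⁻¹ * ↑(R (n-1)) = ↑(R n) + ↑(R n)⁻¹)
      ↔ (∀ n : ℤ, (R (n+1) : A) * ↑C * ↑(R (n-1)) = 1 + (R n : A) * ↑(R n)) := by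
  have key : ∀ n : ℤ, ((R (n+1) : A) * ↑C) = ↑(R n) * ↑(R (n+1)) * ↑(R n)⁻¹ := by
    intro n
    rw [hq n, mul_assoc, Units.mul_inv, mul_one]
  constructor <;> intro h n
  · rw [key n, mul_assoc, mul_assoc, ← mul_assoc ((R (n+1)) : A), h n, mul_add,
      Units.mul_inv, add_comm]
  · have h2 : (R n : A) * (↑(R (n+1)) * ↑(R n)⁻¹ * ↑(R (n-1)))
        = (R n : A) * (↑(R n) + ↑(R n)⁻¹) := by
      rw [mul_add, Units.mul_inv, ← mul_assoc, ← mul_assoc, ← key n, h n,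
        add_comm (1 : A)]
    exact (Units.mul_right_inj (R n)).mp h2
end

section
/- Let A be a unital ring, C ∈ A invertible, R : ℤ → A invertible elements satisfying R(n)·R(n+1) = R(n+1)·C·R(n) and R(n+1)·C·R(n-1) = 1 + R(n)² for all n. Define integer sequences a(j,k) = -⌊(j-k+2)/4⌋, b(j,k) = ⌊(j+k+2)/4⌋, c(j,k) = ⌊(j+k)/4⌋, d(j,k) = -⌊(j-k)/4⌋, and set T(j,k) = C^{-a(j,k)}·R(k)·C^{b(j,k)} and T•(j,k) = C^{-c(j,k)}·R(k)·C^{d(j,k)} for j+k even. Then T(j,k+1)·T•(j,k-1) = 1 + T(j-1,k)·T•(j+1,k) for all j+k odd. -/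
/-- Exponent `a(j,k) = -⌊(j-k+2)/4⌋`. -/
def aExp (j k : ℤ) : ℤ := -((j - k + 2).fdiv 4)
/-- Exponent `b(j,k) = ⌊(j+k+2)/4⌋`. -/
def bExp (j k : ℤ) : ℤ := (j + k + 2).fdiv 4
/-- Exponent `c(j,k) = ⌊(j+k)/4⌋`. -/
def cExp (j k : ℤ) : ℤ := (j + k).fdiv 4
/-- Exponent `d(j,k) = -⌊(j-k)/4⌋`. -/
def dExp (j k : ℤ) : ℤ := -((j - k).fdiv 4)

/-- `T(j,k) = C^{-a(j,k)}·R(k)·C^{b(j,k)}` as a unit. -/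
def Tsol {A : Type*} [Ring A] (C : Aˣ) (R : ℤ → Aˣ) (j k : ℤ) : Aˣ :=
  C ^ (-(aExp j k)) * R k * C ^ (bExp j k)

/-- `T•(j,k) = C^{-c(j,k)}·R(k)·C^{d(j,k)}` as a unit. -/
def TsolB {A : Type*} [Ring A] (C : Aˣ) (R : ℤ → Aˣ) (j k : ℤ) : Aˣ :=
  C ^ (-(cExp j k)) * R k * C ^ (dExp j k)

/-- With `T`, `T•` defined via the explicit floor exponents from
a solution of the quasi-commuting noncommutative A₁ Q-system, the NC A₁
T-system relation `T(j,k+1)·T•(j,k-1) = 1 + T(j-1,k)·T•(j+1,k)` holds for all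
`j+k` odd. -/
theorem stmt12 {A : Type*} [Ring A] (C : Aˣ) (R : ℤ → Aˣ)
    (hq : ∀ n : ℤ, (R n : A) * ↑(R (n+1)) = (R (n+1) : A) * ↑C * ↑(R n))
    (hQ : ∀ n : ℤ, (R (n+1) : A) * ↑C * ↑(R (n-1)) = 1 + (R n : A) * ↑(R n))
    (j k : ℤ) (hjk : Odd (j + k)) :
    (Tsol C R j (k+1) : A) * ↑(TsolB C R j (k-1))
      = 1 + (Tsol C R (j-1) k : A) * ↑(TsolB C R (j+1) k) := by
  have h4 : (4:ℤ) ≠ 0 := by norm_num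
  set p : ℤ := (j - k + 1).fdiv 4 with hp
  set q : ℤ := (j + k - 1).fdiv 4 with hqdef
  set r : ℤ := (j + k + 1).fdiv 4 with hrdef
  have e1 : aExp j (k+1) = -p := by
    unfold aExp; rw [show j-(k+1)+2 = j-k+1 by ring, hp]
  have e2 : bExp j (k+1) = q + 1 := by
    unfold bExp
    rw [show j+(k+1)+2 = (j+k-1)+4 by ring, hqdef,
      Int.fdiv_eq_ediv_of_nonneg _ (by norm_num), Int.fdiv_eq_ediv_of_nonneg _ (by norm_num)]
    omega
  have e3 : cExp j (k-1) = q := by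
    unfold cExp; rw [show j+(k-1) = j+k-1 by ring, hqdef]
  have e4 : dExp j (k-1) = -p := by
    unfold dExp; rw [show j-(k-1) = j-k+1 by ring, hp]
  have e5 : aExp (j-1) k = -p := by
    unfold aExp; rw [show (j-1)-k+2 = j-k+1 by ring, hp]
  have e6 : bExp (j-1) k = r := by
    unfold bExp; rw [show (j-1)+k+2 = j+k+1 by ring, hrdef]
  have e7 : cExp (j+1) k = r := by
    unfold cExp; rw [show (j+1)+k = j+k+1 by ring, hrdef]
  have e8 : dExp (j+1) k = -p := by
    unfold dExp; rw [show (j+1)-k = j-k+1 by ring, hp]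
  have hL : Tsol C R j (k+1) * TsolB C R j (k-1)
      = C ^ p * (R (k+1) * C * R (k-1)) * C ^ (-p) := by
    unfold Tsol TsolB
    rw [e1, e2, e3, e4, neg_neg]
    group
  have hR : Tsol C R (j-1) k * TsolB C R (j+1) k
      = C ^ p * (R k * R k) * C ^ (-p) := by
    unfold Tsol TsolB
    rw [e5, e6, e7, e8, neg_neg]
    group
  have hcancel : ((C ^ p : Aˣ) : A) * ((C ^ (-p) : Aˣ) : A) = 1 := by
    rw [← Units.val_mul, ← zpow_add, add_neg_cancel, zpow_zero, Units.val_one]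
  calc (Tsol C R j (k+1) : A) * ↑(TsolB C R j (k-1))
      = ((Tsol C R j (k+1) * TsolB C R j (k-1) : Aˣ) : A) := by rw [Units.val_mul]
    _ = ((C ^ p : Aˣ) : A) * ((R (k+1) : A) * ↑C * ↑(R (k-1))) * ((C ^ (-p) : Aˣ) : A) := by
        rw [hL]; simp [Units.val_mul, mul_assoc]
    _ = ((C ^ p : Aˣ) : A) * (1 + (R k : A) * ↑(R k)) * ((C ^ (-p) : Aˣ) : A) := by
        rw [hQ k]
    _ = 1 + (Tsol C R (j-1) k : A) * ↑(TsolB C R (j+1) k) := by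
        have hRHS : (Tsol C R (j-1) k : A) * ↑(TsolB C R (j+1) k)
            = ((C ^ p : Aˣ) : A) * ((R k : A) * ↑(R k)) * ((C ^ (-p) : Aˣ) : A) := by
          rw [← Units.val_mul, hR]; simp [Units.val_mul, mul_assoc]
        rw [hRHS, mul_add, add_mul, mul_one, hcancel]
end

section
/- With T(j,k) = C^{-a(j,k)}·R(k)·C^{b(j,k)} and T•(j,k) = C^{-c(j,k)}·R(k)·C^{d(j,k)} as above (with a,b,c,d given by the explicit floor formulas), the quasi-commutation relations of the NC T-system hold: T(j,k-1)⁻¹·T(j+1,k) = T•(j+1,k)·(T•(j,k-1))⁻¹ and T(j-1,k)·T(j,k-1)⁻¹ = (T•(j,k-1))⁻¹·T•(j-1,k) for all j+k odd. -/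
private lemma aux1 {G : Type*} [Group G] (u v c : G) (h : u⁻¹ * v * c = v * u⁻¹)
    (P Q S m : ℤ) :
    (c ^ P * u * c ^ Q)⁻¹ * (c ^ P * v * c ^ (m + 1))
      = (c ^ (-Q) * v * c ^ (-S)) * (c ^ (-m) * u * c ^ (-S))⁻¹ := by
  have e1 : (c ^ P * u * c ^ Q)⁻¹ * (c ^ P * v * c ^ (m + 1))
      = c ^ (-Q) * (u⁻¹ * v * c) * c ^ m := by group
  have e2 : (c ^ (-Q) * v * c ^ (-S)) * (c ^ (-m) * u * c ^ (-S))⁻¹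
      = c ^ (-Q) * (v * u⁻¹) * c ^ m := by group
  rw [e1, e2, h]

private lemma aux2 {G : Type*} [Group G] (u v c : G) (h : u⁻¹ * v * c = v * u⁻¹)
    (P Q S m : ℤ) :
    (c ^ S * v * c ^ Q) * (c ^ P * u * c ^ Q)⁻¹
      = (c ^ (-m) * u * c ^ (-S))⁻¹ * (c ^ (-m) * v * c ^ (-(P - 1))) := by
  have e1 : (c ^ S * v * c ^ Q) * (c ^ P * u * c ^ Q)⁻¹
      = c ^ S * (v * u⁻¹) * c ^ (-P) := by group
  have e2 : (c ^ (-m) * u * c ^ (-S))⁻¹ * (c ^ (-m) * v * c ^ (-(P - 1)))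
      = c ^ S * (u⁻¹ * v * c) * c ^ (-P) := by group
  rw [e1, e2, h]

/-- With `T`, `T•` defined via the explicit floor exponents from
a quasi-commuting family `R`, the quasi-commutation relations of the NC A₁
T-system hold for all `j+k` odd. -/
theorem stmt13 {A : Type*} [Ring A] (C : Aˣ) (R : ℤ → Aˣ)
    (hq : ∀ n : ℤ, (R n : A) * ↑(R (n+1)) = (R (n+1) : A) * ↑C * ↑(R n))
    (j k : ℤ) (hjk : Odd (j + k)) :
    (↑(Tsol C R j (k-1))⁻¹ : A) * ↑(Tsol C R (j+1) k)
        = (TsolB C R (j+1) k : A) * ↑(TsolB C R j (k-1))⁻¹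
      ∧ (Tsol C R (j-1) k : A) * ↑(Tsol C R j (k-1))⁻¹
        = (↑(TsolB C R j (k-1))⁻¹ : A) * ↑(TsolB C R (j-1) k) := by
  -- key relation as a unit equality
  have h0 := hq (k - 1)
  rw [show k - 1 + 1 = k by ring] at h0
  have hU : R (k - 1) * R k = R k * C * R (k - 1) := by
    ext
    push_cast
    exact h0
  have hu : (R (k - 1))⁻¹ * R k * C = R k * (R (k - 1))⁻¹ := by
    have e : (R (k - 1))⁻¹ * R k * C
        = (R (k - 1))⁻¹ * (R k * C * R (k - 1)) * (R (k - 1))⁻¹ := by group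
    rw [e, ← hU]; group
  have h4 : (0 : ℤ) ≤ 4 := by norm_num
  constructor
  · rw [← Units.val_mul, ← Units.val_mul]
    congr 1
    simp only [Tsol, TsolB, aExp, bExp, cExp, dExp, neg_neg,
      Int.fdiv_eq_ediv_of_nonneg _ h4]
    rw [show j - (k - 1) + 2 = j - k + 3 by ring,
        show j + (k - 1) + 2 = j + k + 1 by ring,
        show j + 1 - k + 2 = j - k + 3 by ring,
        show j + 1 + k + 2 = j + k + 3 by ring,
        show j + 1 + k = j + k + 1 by ring,
        show j + 1 - k = j - k + 1 by ring,
        show j + (k - 1) = j + k - 1 by ring,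
        show j - (k - 1) = j - k + 1 by ring,
        show (j + k + 3) / 4 = (j + k - 1) / 4 + 1 by omega]
    exact aux1 (R (k - 1)) (R k) C hu ((j - k + 3) / 4) ((j + k + 1) / 4)
      ((j - k + 1) / 4) ((j + k - 1) / 4)
  · rw [← Units.val_mul, ← Units.val_mul]
    congr 1
    simp only [Tsol, TsolB, aExp, bExp, cExp, dExp, neg_neg,
      Int.fdiv_eq_ediv_of_nonneg _ h4]
    rw [show j - 1 - k + 2 = j - k + 1 by ring,
        show j - 1 + k + 2 = j + k + 1 by ring,
        show j - (k - 1) + 2 = j - k + 3 by ring,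
        show j + (k - 1) + 2 = j + k + 1 by ring,
        show j + (k - 1) = j + k - 1 by ring,
        show j - (k - 1) = j - k + 1 by ring,
        show j - 1 + k = j + k - 1 by ring,
        show (j - 1 - k) / 4 = (j - k + 3) / 4 - 1 by omega]
    exact aux2 (R (k - 1)) (R k) C hu ((j - k + 3) / 4) ((j + k + 1) / 4)
      ((j - k + 1) / 4) ((j + k - 1) / 4)
end

section
/- Let A be a unital ring with involutive anti-automorphism • and a, b, c ∈ A invertible with a⁻¹·b = b•·(a•)⁻¹ and b⁻¹·c = c•·(b•)⁻¹. Suppose b' ∈ A satisfies b'·b• = a• + c•. Then b' satisfies the triangle relation b'·a⁻¹·c = c•·(a•)⁻¹·(b')•, provided (b')• satisfies b·(b')• = a + c. -/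
/-- If `a⁻¹·b = b•·(a•)⁻¹`, `b⁻¹·c = c•·(b•)⁻¹`, and the mutated
variable `b'` satisfies `b'·b• = a• + c•` and `b·(b')• = a + c`, then the
triangle relation `b'·a⁻¹·c = c•·(a•)⁻¹·(b')•` holds. -/
theorem stmt17 {A : Type*} [Ring A] (σ : A → A)
    (hσmul : ∀ u v : A, σ (u * v) = σ v * σ u)
    (hσadd : ∀ u v : A, σ (u + v) = σ u + σ v)
    (hσinv : ∀ u : A, σ (σ u) = u)
    (hσone : σ 1 = 1)
    (a b c ab bb cb : Aˣ)
    (hab : σ ↑a = ↑ab) (hbb : σ ↑b = ↑bb) (hcb : σ ↑c = ↑cb)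
    (h1 : (↑a⁻¹ : A) * ↑b = ↑bb * ↑ab⁻¹)
    (h2 : (↑b⁻¹ : A) * ↑c = ↑cb * ↑bb⁻¹)
    (b' b'b : A) (hb'b : σ b' = b'b)
    (hmut : b' * ↑bb = ↑ab + ↑cb)
    (hmut' : (b : A) * b'b = ↑a + ↑c) :
    b' * ↑a⁻¹ * ↑c = (cb : A) * ↑ab⁻¹ * b'b := by
  -- units versions of h1, h2
  have u1 : a⁻¹ * b = bb * ab⁻¹ := Units.ext (by simpa using h1)
  have u2 : b⁻¹ * c = cb * bb⁻¹ := Units.ext (by simpa using h2)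
  have u3 : b * ab = a * bb := by
    calc b * ab = a * ((a⁻¹ * b) * ab) := by group
    _ = a * ((bb * ab⁻¹) * ab) := by rw [u1]
    _ = a * bb := by group
  have u4 : b⁻¹ * a = ab * bb⁻¹ := by
    calc b⁻¹ * a = b⁻¹ * ((a * bb) * bb⁻¹) := by group
    _ = b⁻¹ * ((b * ab) * bb⁻¹) := by rw [u3]
    _ = ab * bb⁻¹ := by group
  have u5 : bb⁻¹ * a⁻¹ = ab⁻¹ * b⁻¹ := by
    calc bb⁻¹ * a⁻¹ = (a * bb)⁻¹ := by rw [mul_inv_rev]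
    _ = (b * ab)⁻¹ := by rw [u3]
    _ = ab⁻¹ * b⁻¹ := by rw [mul_inv_rev]
  -- coerced versions
  have e4 : (↑b⁻¹ : A) * ↑a = ↑ab * ↑bb⁻¹ := by
    have := congrArg (Units.val) u4; simpa using this
  have e5 : (↑bb⁻¹ : A) * ↑a⁻¹ = ↑ab⁻¹ * ↑b⁻¹ := by
    have := congrArg (Units.val) u5; simpa using this
  have hB : b' = (↑ab + ↑cb) * ↑bb⁻¹ := by
    rw [Units.eq_mul_inv_iff_mul_eq]; exact hmut
  have hB' : b'b = (↑b⁻¹ : A) * (↑a + ↑c) := by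
    rw [Units.eq_inv_mul_iff_mul_eq]; exact hmut'
  rw [hB, hB']
  calc (↑ab + ↑cb) * ↑bb⁻¹ * ↑a⁻¹ * ↑c
      = (↑ab + ↑cb) * (↑ab⁻¹ * ↑b⁻¹) * ↑c := by
        rw [mul_assoc ((↑ab : A) + ↑cb), e5]
    _ = ↑b⁻¹ * ↑c + ↑cb * ↑ab⁻¹ * (↑b⁻¹ * ↑c) := by
        simp [add_mul, mul_add, mul_assoc]
    _ = ↑cb * ↑ab⁻¹ * (↑b⁻¹ * ↑a) + ↑cb * ↑ab⁻¹ * (↑b⁻¹ * ↑c) := by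
        rw [e4, h2]
        simp [mul_assoc]
    _ = ↑cb * ↑ab⁻¹ * ((↑b⁻¹ : A) * (↑a + ↑c)) := by
        rw [mul_add, mul_add]
end

section
/- Let A be a unital ring with involutive anti-automorphism •. Suppose a, b, c, x and their bullets are invertible, with a·b⁻¹ = (b•)⁻¹·a• and b⁻¹·c = c•·(b•)⁻¹ and x·b• = 1 + a·c•. Then b•·x = 1 + a•·c, and consequently x•·b = 1 + c•·a and b = (x•)⁻¹ + c·x⁻¹·a. -/
/-- If `a·b⁻¹ = (b•)⁻¹·a•`, `b⁻¹·c = c•·(b•)⁻¹` and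
`x·b• = 1 + a·c•`, then `b•·x = 1 + a•·c`, `x•·b = 1 + c•·a`, and
`b = (x•)⁻¹ + c·x⁻¹·a`. -/
theorem stmt19 {A : Type*} [Ring A] (σ : A → A)
    (hσmul : ∀ u v : A, σ (u * v) = σ v * σ u)
    (hσadd : ∀ u v : A, σ (u + v) = σ u + σ v)
    (hσinv : ∀ u : A, σ (σ u) = u)
    (hσone : σ 1 = 1)
    (a b c x ab bb cb xb : Aˣ)
    (hab : σ ↑a = ↑ab) (hbb : σ ↑b = ↑bb) (hcb : σ ↑c = ↑cb) (hxb : σ ↑x = ↑xb)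
    (h1 : (a : A) * ↑b⁻¹ = ↑bb⁻¹ * ↑ab)
    (h2 : (↑b⁻¹ : A) * ↑c = ↑cb * ↑bb⁻¹)
    (h3 : (x : A) * ↑bb = 1 + ↑a * ↑cb) :
    (bb : A) * ↑x = 1 + ↑ab * ↑c
      ∧ (xb : A) * ↑b = 1 + ↑cb * ↑a
      ∧ (b : A) = ↑xb⁻¹ + ↑c * ↑x⁻¹ * ↑a := by
  -- E1 : bb * a = ab * b
  have hE1 : (bb : A) * ↑a = ↑ab * ↑b := by
    have h := congrArg (fun t : A => (bb : A) * t * ↑b) h1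
    simpa [mul_assoc] using h
  -- E2 : c * bb = b * cb
  have hE2 : (c : A) * ↑bb = ↑b * ↑cb := by
    have h := congrArg (fun t : A => (b : A) * t * ↑bb) h2
    simpa [mul_assoc] using h
  -- bb * a * b⁻¹ = ab
  have hE1' : (bb : A) * ↑a * ↑b⁻¹ = ↑ab := by
    rw [hE1]; simp [mul_assoc]
  -- cb = b⁻¹ * c * bb
  have hE2' : (cb : A) = ↑b⁻¹ * ↑c * ↑bb := by
    rw [mul_assoc, hE2]; simp [← mul_assoc]
  -- Goal 1 : bb * x = 1 + ab * c
  have hG1 : (bb : A) * ↑x = 1 + ↑ab * ↑c := by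
    have key : ((bb : A) * ↑x) * ↑bb = (1 + ↑ab * ↑c) * ↑bb := by
      calc ((bb : A) * ↑x) * ↑bb = ↑bb * (↑x * ↑bb) := by noncomm_ring
        _ = ↑bb + ↑bb * ↑a * ↑cb := by rw [h3]; noncomm_ring
        _ = ↑bb + ↑ab * (↑b * ↑cb) := by rw [hE1]; noncomm_ring
        _ = ↑bb + ↑ab * (↑c * ↑bb) := by rw [hE2]
        _ = (1 + ↑ab * ↑c) * ↑bb := by noncomm_ring
    have h := congrArg (fun t : A => t * (↑bb⁻¹ : A)) key
    simpa [mul_assoc] using h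
  -- Goal 2 : xb * b = 1 + cb * a   (apply σ to Goal 1)
  have hG2 : (xb : A) * ↑b = 1 + ↑cb * ↑a := by
    have h := congrArg σ hG1
    rw [hσmul, hσadd, hσone, hσmul, hxb, hcb, ← hbb, ← hab, hσinv, hσinv] at h
    exact h
  refine ⟨hG1, hG2, ?_⟩
  -- x = bb⁻¹ + a * b⁻¹ * c
  have hx : (x : A) = ↑bb⁻¹ + ↑a * ↑b⁻¹ * ↑c := by
    have h := congrArg (fun t : A => (↑bb⁻¹ : A) * t) hG1
    simp only [← mul_assoc, Units.inv_mul, one_mul] at h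
    rw [h, mul_add, mul_one, ← mul_assoc, ← h1]
  -- xb = b⁻¹ + cb * a * b⁻¹
  have hxbv : (xb : A) = ↑b⁻¹ + ↑cb * ↑a * ↑b⁻¹ := by
    have h := congrArg (fun t : A => t * (↑b⁻¹ : A)) hG2
    simp only [mul_assoc, Units.mul_inv, mul_one] at h
    rw [h, add_mul, one_mul, mul_assoc]
  -- cb * a * b⁻¹ = b⁻¹ * c * ab
  have hcab : (cb : A) * ↑a * ↑b⁻¹ = ↑b⁻¹ * ↑c * ↑ab := by
    have hass : (↑b⁻¹ : A) * ↑c * ↑bb * ↑a * ↑b⁻¹ = ↑b⁻¹ * ↑c * (↑bb * ↑a * ↑b⁻¹) := by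
      simp [mul_assoc]
    rw [hE2', hass, hE1']
  -- key : cb * x = xb * c
  have hkey : (cb : A) * ↑x = ↑xb * ↑c := by
    calc (cb : A) * ↑x = ↑cb * ↑bb⁻¹ + (↑cb * ↑a * ↑b⁻¹) * ↑c := by rw [hx]; noncomm_ring
      _ = ↑b⁻¹ * ↑c + (↑b⁻¹ * ↑c * ↑ab) * ↑c := by rw [← h2, hcab]
      _ = ↑b⁻¹ * ↑c + (↑cb * ↑a * ↑b⁻¹) * ↑c := by rw [hcab]
      _ = ↑xb * ↑c := by rw [hxbv]; noncomm_ring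
  -- xb⁻¹ * cb = c * x⁻¹
  have hinv : (↑xb⁻¹ : A) * ↑cb = ↑c * ↑x⁻¹ := by
    have h := congrArg (fun t : A => (↑xb⁻¹ : A) * t * ↑x⁻¹) hkey
    simpa [mul_assoc] using h
  -- conclude
  have h := congrArg (fun t : A => (↑xb⁻¹ : A) * t) hG2
  simp only [← mul_assoc, Units.inv_mul, one_mul] at h
  rw [h, mul_add, mul_one, ← mul_assoc, hinv]
end
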